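/- Suppose an array (d_{i,j}) over a field satisfies the two symplectic 2-frieze local rules: e_{i,j} := d_{i,j} d_{i+1,j+1} − d_{i+1,j} d_{i,j+1} (white entries as 2×2 determinants of black entries), and d_{i,j}² = e_{i-1,j-1} e_{i,j} − e_{i,j-1} e_{i-1,j} for all i,j. If d_{i,j} ≠ 0 for all relevant indices, then every 3×3 minor of adjacent black entries equals its central element: det of the 3×3 matrix (d_{i+r,j+s})_{r,s∈{−1,0,1}} equals d_{i,j}. -/
import Mathlib


/-- In a symplectic 2-frieze (local rules, all entries nonzero), every adjacent
3×3 minor of black entries equals its central element. -/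
theorem frieze_three_minor_eq_center {K : Type*} [Field K] (d e : ℤ → ℤ → K)
    (he : ∀ i j : ℤ, e i j = d i j * d (i + 1) (j + 1) - d (i + 1) j * d i (j + 1))
    (hblack : ∀ i j : ℤ,
      (d i j) ^ 2 = e (i - 1) (j - 1) * e i j - e i (j - 1) * e (i - 1) j)
    (hnz : ∀ i j : ℤ, d i j ≠ 0) :
    ∀ i j : ℤ,
      (Matrix.of fun r s : Fin 3 => d (i + (r : ℕ) - 1) (j + (s : ℕ) - 1)).det = d i j := by
  intro i j
  have h := hblack i j
  simp only [he] at h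
  have hi1 : i - 1 + 1 = i := by ring
  have hj1 : j - 1 + 1 = j := by ring
  rw [hi1, hj1] at h
  apply mul_right_cancel₀ (hnz i j)
  rw [Matrix.det_fin_three]
  simp only [Matrix.of_apply, Fin.isValue, Fin.val_zero, Fin.val_one, Fin.val_two]
  push_cast
  have e0 : i + 0 - 1 = i - 1 := by ring
  have e1 : i + 1 - 1 = i := by ring
  have e2 : i + 2 - 1 = i + 1 := by ring
  have f0 : j + 0 - 1 = j - 1 := by ring
  have f1 : j + 1 - 1 = j := by ring
  have f2 : j + 2 - 1 = j + 1 := by ring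
  rw [e0, e1, e2, f0, f1, f2]
  linear_combination -h
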